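/- Let (R,m,k) be a commutative Noetherian local ring and let N be a finitely generated R-module. The following are equivalent: (1) there exists a finitely generated R-module X such that N is isomorphic to a Burch submodule of X; (2) there exists an R-module homomorphism f : m → N such that the induced map f ⊗_R k : m ⊗_R k → N ⊗_R k is nonzero; (3) the trace τ_m(N) of m in N, i.e., the sum of the images of all R-homomorphisms m → N, is not contained in mN. -/

import Mathlib

open CategoryTheory

universe u

/-- The colon submodule `(N :_X I) = {x ∈ X : I • x ⊆ N}`. -/
def Submodule.colonBy {R X : Type u} [CommRing R] [AddCommGroup X] [Module R X]
    (N : Submodule R X) (I : Ideal R) : Submodule R X where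
  carrier := {x | ∀ r ∈ I, r • x ∈ N}
  add_mem' := by
    intro a b ha hb r hr
    rw [smul_add]
    exact N.add_mem (ha r hr) (hb r hr)
  zero_mem' := by
    intro r hr
    rw [smul_zero]
    exact N.zero_mem
  smul_mem' := by
    intro c x hx r hr
    rw [smul_comm]
    exact N.smul_mem c (hx r hr)

/-- A submodule `N` of a module `X` over a local ring `(R, 𝔪)` is *Burch* if
`𝔪 • (N :_X 𝔪) ≠ 𝔪 • N`. -/
def Submodule.IsBurch {R X : Type u} [CommRing R] [IsLocalRing R] [AddCommGroup X]
    [Module R X] (N : Submodule R X) : Prop :=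
  IsLocalRing.maximalIdeal R • N.colonBy (IsLocalRing.maximalIdeal R) ≠
    IsLocalRing.maximalIdeal R • N

/-- `Tor_n^R(M, N) = 0`. -/
def TorIsZero (R : Type u) [CommRing R] (M N : Type u) [AddCommGroup M] [Module R M]
    [AddCommGroup N] [Module R N] (n : ℕ) : Prop :=
  Subsingleton (((Tor (ModuleCat.{u} R) n).obj (ModuleCat.of R M)).obj (ModuleCat.of R N))

/-- `Ext^n_R(M, N) = 0`. -/
def ExtIsZero (R : Type u) [CommRing R] (M N : Type u) [AddCommGroup M] [Module R M]
    [AddCommGroup N] [Module R N] (n : ℕ) : Prop :=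
  Subsingleton
    (((Ext R (ModuleCat.{u} R) n).obj (Opposite.op (ModuleCat.of R M))).obj (ModuleCat.of R N))

/-- `M` has projective dimension strictly less than `t`, i.e. `M` admits a projective
resolution vanishing in all degrees `≥ t`. -/
def HasProjDimLT (R : Type u) [CommRing R] (M : Type u) [AddCommGroup M] [Module R M]
    (t : ℕ) : Prop :=
  ∃ P : ProjectiveResolution (ModuleCat.of R M), ∀ i, t ≤ i → Limits.IsZero (P.complex.X i)

/-- `M` has injective dimension strictly less than `t`, i.e. `M` admits an injective
resolution vanishing in all degrees `≥ t`. -/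
def HasInjDimLT (R : Type u) [CommRing R] (M : Type u) [AddCommGroup M] [Module R M]
    (t : ℕ) : Prop :=
  ∃ I : InjectiveResolution (ModuleCat.of R M), ∀ i, t ≤ i → Limits.IsZero (I.cocomplex.X i)

/-- The depth of a module `M` over a local ring `(R, 𝔪, k)`: the smallest `i` such that
`Ext^i_R(k, M) ≠ 0` (and `⊤` if no such `i` exists). -/
noncomputable def moduleDepth (R : Type u) [CommRing R] [IsLocalRing R] (M : Type u)
    [AddCommGroup M] [Module R M] : ℕ∞ :=
  sInf {n : ℕ∞ | ∃ i : ℕ, n = (i : ℕ∞) ∧ ¬ ExtIsZero R (IsLocalRing.ResidueField R) M i}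


section AuxBurch
open IsLocalRing
variable {R : Type u} [CommRing R] [IsLocalRing R]
  {N : Type u} [AddCommGroup N] [Module R N]

private lemma rTensor_eq_zero_iff' (f : ↥(maximalIdeal R) →ₗ[R] N) :
    LinearMap.rTensor (ResidueField R) f = 0 ↔
      LinearMap.range f ≤ maximalIdeal R • (⊤ : Submodule R N) := by
  constructor
  · intro h x hx
    obtain ⟨a, rfl⟩ := hx
    have h1 : LinearMap.rTensor (ResidueField R) f (a ⊗ₜ (1 : ResidueField R)) = 0 := by
      rw [h]; rfl
    rw [LinearMap.rTensor_tmul] at h1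
    have h2 := congrArg (TensorProduct.tensorQuotEquivQuotSMul N (maximalIdeal R)) h1
    erw [map_zero] at h2
    have : (1 : ResidueField R) = Ideal.Quotient.mk (maximalIdeal R) 1 := rfl
    erw [this, TensorProduct.tensorQuotEquivQuotSMul_tmul_mk, one_smul] at h2
    rwa [Submodule.Quotient.mk_eq_zero] at h2
  · intro h
    apply LinearMap.ext; intro x
    refine TensorProduct.induction_on x (by simp)  (fun a c => ?_) (fun a b ha hb => by
      simp only [map_add, ha, hb, add_zero])
    obtain ⟨r, rfl⟩ := Ideal.Quotient.mk_surjective (I := maximalIdeal R) c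
    simp only [LinearMap.rTensor_tmul, LinearMap.zero_apply]
    apply (TensorProduct.tensorQuotEquivQuotSMul N (maximalIdeal R)).injective
    erw [TensorProduct.tensorQuotEquivQuotSMul_tmul_mk, map_zero,
      Submodule.Quotient.mk_eq_zero]
    exact Submodule.smul_mem _ r (h ⟨a, rfl⟩)

private lemma construct_burch [Module.Finite R N] (f : ↥(maximalIdeal R) →ₗ[R] N)
    (hf : ¬ LinearMap.range f ≤ maximalIdeal R • (⊤ : Submodule R N)) :
    (∃ (X : Type u) (_ : AddCommGroup X) (_ : Module R X) (_ : Module.Finite R X)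
        (K : Submodule R X), K.IsBurch ∧ Nonempty (N ≃ₗ[R] ↥K)) := by
  set h : ↥(maximalIdeal R) →ₗ[R] N × R :=
    { toFun := fun a => (f a, -(a : R))
      map_add' := by intro a b; simp [Prod.ext_iff]; abel
      map_smul' := by intro r a; simp [Prod.ext_iff, smul_eq_mul] }
  set W := LinearMap.range h with hW
  refine ⟨(N × R) ⧸ W, inferInstance, inferInstance, inferInstance, ?_⟩
  set j : N →ₗ[R] (N × R) ⧸ W := W.mkQ ∘ₗ LinearMap.inl R N R with hjdef
  have hj : Function.Injective j := by
    rw [← LinearMap.ker_eq_bot]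
    rw [Submodule.eq_bot_iff]
    intro a ha
    have : ((a, 0) : N × R) ∈ W := by
      rw [← Submodule.Quotient.mk_eq_zero]
      exact ha
    obtain ⟨c, hc⟩ := this
    have hc2 : -(c : R) = 0 := congrArg Prod.snd hc
    have hc0 : c = 0 := Subtype.ext (by simpa using hc2)
    have hc1 := congrArg Prod.fst hc
    simp only [h, LinearMap.coe_mk, AddHom.coe_mk] at hc1
    rw [hc0, map_zero] at hc1
    exact hc1.symm
  set K := LinearMap.range j with hK
  refine ⟨K, ?_, ⟨LinearEquiv.ofInjective j hj⟩⟩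
  obtain ⟨n, hn1, hn2⟩ := SetLike.not_le_iff_exists.mp hf
  obtain ⟨r₀, rfl⟩ := hn1
  set z : (N × R) ⧸ W := Submodule.Quotient.mk (0, 1) with hz
  have hzc : z ∈ K.colonBy (maximalIdeal R) := by
    intro r hr
    have key : r • z = j (f ⟨r, hr⟩) := by
      rw [hz]
      show Submodule.Quotient.mk (r • ((0,1) : N × R)) = Submodule.Quotient.mk _
      rw [Submodule.Quotient.eq]
      refine ⟨-⟨r, hr⟩, ?_⟩
      simp [h, Prod.ext_iff]
    rw [key]
    exact ⟨f ⟨r, hr⟩, rfl⟩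
  intro hBurch
  have hmK : maximalIdeal R • K = Submodule.map j (maximalIdeal R • (⊤ : Submodule R N)) := by
    rw [Submodule.map_smul'']
    congr 1
    rw [Submodule.map_top]
  have hmem : (r₀ : R) • z ∈ maximalIdeal R • K := by
    rw [← hBurch]
    exact Submodule.smul_mem_smul r₀.2 hzc
  rw [hmK] at hmem
  obtain ⟨n', hn', hn'eq⟩ := hmem
  have : (r₀ : R) • z = j (f r₀) := by
    rw [hz]
    show Submodule.Quotient.mk ((r₀ : R) • ((0,1) : N × R)) = Submodule.Quotient.mk _
    rw [Submodule.Quotient.eq]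
    refine ⟨-r₀, ?_⟩
    simp [h, Prod.ext_iff]
  rw [this] at hn'eq
  exact hn2 (hj hn'eq ▸ hn')

private lemma from_burch {X : Type u} [AddCommGroup X] [Module R X] (K : Submodule R X)
    (hK : K.IsBurch) (e : N ≃ₗ[R] ↥K) :
    ∃ f : ↥(maximalIdeal R) →ₗ[R] N,
      ¬ LinearMap.range f ≤ maximalIdeal R • (⊤ : Submodule R N) := by
  have hKle : K ≤ K.colonBy (maximalIdeal R) := fun x hx r hr => K.smul_mem r hx
  have hex : ∃ x ∈ K.colonBy (maximalIdeal R), ∃ r ∈ maximalIdeal R,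
      r • x ∉ maximalIdeal R • K := by
    by_contra hcon
    push_neg at hcon
    apply hK
    refine le_antisymm (Submodule.smul_le.mpr ?_) (smul_mono_right _ hKle)
    intro r hr x hx
    exact hcon x hx r hr
  obtain ⟨x, hx, r, hr, hrx⟩ := hex
  set g : ↥(maximalIdeal R) →ₗ[R] ↥K :=
    { toFun := fun a => ⟨(a : R) • x, hx a a.2⟩
      map_add' := by intro a b; simp [add_smul]
      map_smul' := by intro c a; simp [mul_smul] }
  refine ⟨e.symm.toLinearMap ∘ₗ g, fun hle => ?_⟩
  set φ : N →ₗ[R] X := K.subtype ∘ₗ e.toLinearMap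
  have h1 : (e.symm.toLinearMap ∘ₗ g) ⟨r, hr⟩ ∈ maximalIdeal R • (⊤ : Submodule R N) :=
    hle ⟨⟨r, hr⟩, rfl⟩
  have h2 : φ ((e.symm.toLinearMap ∘ₗ g) ⟨r, hr⟩) ∈
      Submodule.map φ (maximalIdeal R • (⊤ : Submodule R N)) :=
    Submodule.mem_map_of_mem h1
  rw [Submodule.map_smul''] at h2
  have h3 : Submodule.map φ (⊤ : Submodule R N) ≤ K := by
    rintro y ⟨n, -, rfl⟩
    exact (e n).2
  have h4 : φ ((e.symm.toLinearMap ∘ₗ g) ⟨r, hr⟩) = r • x := by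
    show (K.subtype (e (e.symm (g ⟨r, hr⟩)))) = r • x
    rw [e.apply_symm_apply]
    rfl
  rw [h4] at h2
  exact hrx (smul_mono_right (maximalIdeal R) h3 h2)

end AuxBurch

/-- Over a Noetherian local ring `(R, 𝔪, k)` and a finitely generated module
`N`, the following are equivalent: (1) `N` is isomorphic to a Burch submodule of some finitely
generated module `X`; (2) there is a homomorphism `f : 𝔪 → N` with `f ⊗ k ≠ 0`; (3) the trace
`τ_𝔪(N) = ∑_{f : 𝔪 → N} Im f` is not contained in `𝔪N`. -/
theorem isomorphic_to_burch_iff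
    {R : Type u} [CommRing R] [IsNoetherianRing R] [IsLocalRing R]
    {N : Type u} [AddCommGroup N] [Module R N] [Module.Finite R N] :
    ((∃ (X : Type u) (_ : AddCommGroup X) (_ : Module R X) (_ : Module.Finite R X)
        (K : Submodule R X), K.IsBurch ∧ Nonempty (N ≃ₗ[R] ↥K)) ↔
      (∃ f : ↥(IsLocalRing.maximalIdeal R) →ₗ[R] N,
        LinearMap.rTensor (IsLocalRing.ResidueField R) f ≠ 0)) ∧
    ((∃ f : ↥(IsLocalRing.maximalIdeal R) →ₗ[R] N,
        LinearMap.rTensor (IsLocalRing.ResidueField R) f ≠ 0) ↔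
      ¬ (⨆ f : ↥(IsLocalRing.maximalIdeal R) →ₗ[R] N, LinearMap.range f) ≤
          IsLocalRing.maximalIdeal R • (⊤ : Submodule R N)) := by
  constructor
  · constructor
    · rintro ⟨X, _, _, _, K, hB, ⟨e⟩⟩
      obtain ⟨f, hf⟩ := from_burch K hB e
      exact ⟨f, fun h0 => hf ((rTensor_eq_zero_iff' f).mp h0)⟩
    · rintro ⟨f, hf⟩
      exact construct_burch f (fun h => hf ((rTensor_eq_zero_iff' f).mpr h))
  · constructor
    · rintro ⟨f, hf⟩ hle
      exact hf ((rTensor_eq_zero_iff' f).mpr ((le_iSup (fun g => LinearMap.range g) f).trans hle))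
    · intro hns
      by_contra hc
      push_neg at hc
      apply hns
      rw [iSup_le_iff]
      intro f
      exact (rTensor_eq_zero_iff' f).mp (hc f)
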